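/- Consider a parity game whose node set is partitioned into Proponent nodes V_P and Opponent nodes V_O, which is bipartite (every edge goes between V_P and V_O) and in which every Opponent node has priority 0. If a Proponent strategy S on a set of initial nodes V₀ admits a parity progress measure, then S is a winning strategy on V₀; in particular every infinite play conforming to S and starting in V₀ satisfies the parity condition. -/

import Mathlib

/-- A parity game: nodes `V`, Proponent nodes (`isP`), edges `E`, priorities `prio`. -/
structure ParityGame where
  V : Type
  isP : V → Prop
  E : V → V → Prop
  prio : V → ℕ

namespace ParityGame

variable (G : ParityGame)

/-- A finite play: consecutive nodes are connected by edges. -/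
def IsPlay (l : List G.V) : Prop := l.Chain' G.E

/-- The history `π 0, …, π i` of an infinite play. -/
def history (π : ℕ → G.V) (i : ℕ) : List G.V := (List.range (i + 1)).map π

/-- A finite play conforms with the (partial) strategy `S`. -/
def Conforms (S : List G.V → Option G.V) (l : List G.V) : Prop :=
  ∀ (i : ℕ) (h : i + 1 < l.length),
    G.isP (l[i]'(Nat.lt_of_succ_lt h)) → S (l.take (i + 1)) = some (l[i + 1]'h)

/-- The play starts from a node in `V₀`. -/
def StartsIn (V₀ : Set G.V) (l : List G.V) : Prop := ∃ v₀ ∈ V₀, l.head? = some v₀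

/-- `S` is a Proponent strategy on `V₀`: it respects edges and is defined on every
conforming play starting in `V₀` and ending in a Proponent node. -/
def IsStrategy (S : List G.V → Option G.V) (V₀ : Set G.V) : Prop :=
  (∀ l v w, S l = some w → l.getLast? = some v → G.E v w) ∧
  (∀ l, G.IsPlay l → G.Conforms S l → G.StartsIn V₀ l →
    (∃ v, l.getLast? = some v ∧ G.isP v) → (S l).isSome)

/-- An infinite play. -/
def IsInfPlay (π : ℕ → G.V) : Prop := ∀ i, G.E (π i) (π (i + 1))

/-- An infinite play conforms with the strategy `S`. -/
def ConformsInf (S : List G.V → Option G.V) (π : ℕ → G.V) : Prop :=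
  ∀ i, G.isP (π i) → S (G.history π i) = some (π (i + 1))

/-- The parity condition: the maximum priority occurring infinitely often is even. -/
def ParityCond (π : ℕ → G.V) : Prop :=
  ∃ m, Even m ∧ {i | G.prio (π i) = m}.Infinite ∧
    ∀ m', {i | G.prio (π i) = m'}.Infinite → m' ≤ m

/-- `S` is winning on `V₀`: every maximal finite conforming play starting in `V₀`
ends in an Opponent node, and every infinite conforming play starting in `V₀`
satisfies the parity condition. -/
def Winning (S : List G.V → Option G.V) (V₀ : Set G.V) : Prop :=
  (∀ l v, G.IsPlay l → G.Conforms S l → G.StartsIn V₀ l →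
    l.getLast? = some v → (∀ w, ¬ G.E v w) → ¬ G.isP v) ∧
  (∀ π, G.IsInfPlay π → G.ConformsInf S π → π 0 ∈ V₀ → G.ParityCond π)

end ParityGame

/-- `lexGE k a b`: the first `k` components of `a` are lexicographically ≥ those of `b`. -/
def lexGE : ℕ → (ℕ → Ordinal) → (ℕ → Ordinal) → Prop
  | 0, _, _ => True
  | k + 1, a, b => b 0 < a 0 ∨ (a 0 = b 0 ∧ lexGE k (fun i => a (i + 1)) (fun i => b (i + 1)))

/-- `lexGT k a b`: the first `k` components of `a` are lexicographically > those of `b`. -/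
def lexGT : ℕ → (ℕ → Ordinal) → (ℕ → Ordinal) → Prop
  | 0, _, _ => False
  | k + 1, a, b => b 0 < a 0 ∨ (a 0 = b 0 ∧ lexGT k (fun i => a (i + 1)) (fun i => b (i + 1)))

namespace ParityGame

variable (G : ParityGame)

/-- A parity progress measure of the strategy `S` on `V₀`, with values tuples of
ordinals `< γ` (of length `n`, the maximal priority): for every conforming finite play
`ṽ · v_O · v_P · v_O'` starting from `V₀`, the measure is defined on `v_O` and `v_O'`,
decreases weakly w.r.t. `≥_{Ω(v_P)}`, and strictly if `Ω(v_P)` is odd. -/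
def IsProgressMeasure (S : List G.V → Option G.V) (V₀ : Set G.V) (n : ℕ) (γ : Ordinal)
    (ϖ : G.V → Option (ℕ → Ordinal)) : Prop :=
  (∀ v t, ϖ v = some t → ∀ i, t i < γ) ∧
  (∀ (l : List G.V) (vO vP vO' : G.V),
    G.IsPlay (l ++ [vO, vP, vO']) → G.Conforms S (l ++ [vO, vP, vO']) →
    G.StartsIn V₀ (l ++ [vO, vP, vO']) →
    ¬ G.isP vO → G.isP vP → ¬ G.isP vO' →
    ∃ t t', ϖ vO = some t ∧ ϖ vO' = some t' ∧
      lexGE (n + 1 - G.prio vP) t t' ∧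
      (Odd (G.prio vP) → lexGT (n + 1 - G.prio vP) t t'))

end ParityGame

section Hist
variable (G : ParityGame) (π : ℕ → G.V)

lemma hist_getElem (i j : ℕ) (hj : j < (G.history π i).length) :
    (G.history π i)[j] = π j := by
  simp [ParityGame.history] at hj ⊢

lemma hist_play (hπ : G.IsInfPlay π) (i : ℕ) : G.IsPlay (G.history π i) := by
  rw [ParityGame.IsPlay, ParityGame.history, List.Chain', List.isChain_map, List.isChain_range_succ]
  exact fun m _ => hπ m

lemma hist_take (i j : ℕ) (h : j ≤ i) :
    (G.history π i).take (j + 1) = G.history π j := by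
  have : (j + 1) ⊓ (i + 1) = j + 1 := by omega
  simp [ParityGame.history, ← List.map_take, List.take_range, this]

lemma hist_conf (S : List G.V → Option G.V) (hc : G.ConformsInf S π) (i : ℕ) :
    G.Conforms S (G.history π i) := by
  intro j hj hP
  have hlen : (G.history π i).length = i + 1 := by simp [ParityGame.history]
  rw [hist_getElem] at hP
  rw [hist_getElem, hist_take G π i j (by omega)]
  exact hc j hP

lemma hist_start (V₀ : Set G.V) (h0 : π 0 ∈ V₀) (i : ℕ) :
    G.StartsIn V₀ (G.history π i) := by
  refine ⟨π 0, h0, ?_⟩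
  rw [ParityGame.history, List.head?_map, List.range_succ_eq_map]
  rfl

lemma hist_decomp (i : ℕ) :
    G.history π (i + 2) = ((List.range i).map π) ++ [π i, π (i + 1), π (i + 2)] := by
  show (List.range (i + 3)).map π = _
  rw [List.range_succ, List.range_succ, List.range_succ]
  simp

end Hist


lemma lexGE_refl : ∀ k a, lexGE k a a
  | 0, _ => trivial
  | k + 1, _ => Or.inr ⟨rfl, lexGE_refl k _⟩

lemma lexGE_trans : ∀ k a b c, lexGE k a b → lexGE k b c → lexGE k a c
  | 0, _, _, _, _, _ => trivial
  | k + 1, a, b, c, h1, h2 => by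
    rcases h1 with h1 | ⟨e1, h1⟩
    · rcases h2 with h2 | ⟨e2, h2⟩
      · exact Or.inl (h2.trans h1)
      · exact Or.inl (e2 ▸ h1)
    · rcases h2 with h2 | ⟨e2, h2⟩
      · exact Or.inl (e1 ▸ h2)
      · exact Or.inr ⟨e1.trans e2, lexGE_trans k _ _ _ h1 h2⟩

lemma lexGT_trans_ge : ∀ k a b c, lexGT k a b → lexGE k b c → lexGT k a c
  | 0, _, _, _, h, _ => h.elim
  | k + 1, a, b, c, h1, h2 => by
    rcases h1 with h1 | ⟨e1, h1⟩
    · rcases h2 with h2 | ⟨e2, h2⟩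
      · exact Or.inl (h2.trans h1)
      · exact Or.inl (e2 ▸ h1)
    · rcases h2 with h2 | ⟨e2, h2⟩
      · exact Or.inl (e1 ▸ h2)
      · exact Or.inr ⟨e1.trans e2, lexGT_trans_ge k _ _ _ h1 h2⟩

lemma lexGE_mono : ∀ k j, j ≤ k → ∀ a b, lexGE k a b → lexGE j a b
  | _, 0, _, _, _, _ => trivial
  | 0, j + 1, hj, _, _, _ => absurd hj (by omega)
  | k + 1, j + 1, hj, a, b, h => by
    rcases h with h | ⟨e, h⟩
    · exact Or.inl h
    · exact Or.inr ⟨e, lexGE_mono k j (by omega) _ _ h⟩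

lemma lexGT_wf : ∀ (k : ℕ) (f : ℕ → (ℕ → Ordinal)), ¬ ∀ i, lexGT k (f i) (f (i + 1))
  | 0, f, h => (h 0).elim
  | k + 1, f, h => by
    have hdec : ∀ i, f (i + 1) 0 ≤ f i 0 := by
      intro i
      rcases h i with h' | ⟨e, _⟩
      · exact h'.le
      · exact e.ge
    have hdec' : ∀ i j, i ≤ j → f j 0 ≤ f i 0 := by
      intro i j hij
      induction j with
      | zero => simp_all
      | succ j ih =>
        rcases Nat.lt_or_ge i (j + 1) with h' | h'
        · exact (hdec j).trans (ih (by omega))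
        · have : i = j + 1 := by omega
          exact this ▸ le_rfl
    obtain ⟨_, ⟨i₀, rfl⟩, hmin⟩ := Ordinal.lt_wf.has_min (Set.range fun i => f i 0)
      ⟨f 0 0, 0, rfl⟩
    have hconst : ∀ i, i₀ ≤ i → f i 0 = f i₀ 0 := fun i hi =>
      le_antisymm (hdec' _ _ hi) (not_lt.mp (hmin _ ⟨i, rfl⟩))
    refine lexGT_wf k (fun i j => f (i₀ + i) (j + 1)) ?_
    intro i
    rcases h (i₀ + i) with h' | ⟨_, h'⟩
    · rw [hconst (i₀ + i) (by omega), hconst (i₀ + i + 1) (by omega)] at h'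
      exact absurd h' (lt_irrefl _)
    · exact h'

lemma main_parity (G : ParityGame)
    (hbip : ∀ v w, G.E v w → (G.isP v ↔ ¬ G.isP w))
    (hopp : ∀ v, ¬ G.isP v → G.prio v = 0)
    (n : ℕ) (hbound : ∀ v, G.prio v ≤ n)
    (V₀ : Set G.V) (S : List G.V → Option G.V)
    (γ : Ordinal) (ϖ : G.V → Option (ℕ → Ordinal))
    (hmeas : G.IsProgressMeasure S V₀ n γ ϖ)
    (π : ℕ → G.V) (hπ : G.IsInfPlay π) (hc : G.ConformsInf S π) (h0 : π 0 ∈ V₀) :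
    G.ParityCond π := by
  classical
  -- alternation
  have flip : ∀ i, G.isP (π (i + 1)) ↔ ¬ G.isP (π i) := by
    intro i
    have h := hbip _ _ (hπ i)
    tauto
  set i₀ : ℕ := if G.isP (π 0) then 1 else 0 with hi₀
  have hO0 : ¬ G.isP (π i₀) := by
    by_cases h : G.isP (π 0)
    · rw [hi₀, if_pos h]
      exact fun h1 => (flip 0).mp h1 h
    · rwa [hi₀, if_neg h]
  have hO : ∀ j, G.isP (π (i₀ + j)) ↔ Odd j := by
    intro j
    induction j with
    | zero => simpa using hO0
    | succ j ih =>
      rw [show i₀ + (j + 1) = (i₀ + j) + 1 from rfl, flip (i₀ + j), ih, Nat.odd_add_one,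
        Nat.not_odd_iff_even]
  -- measure along O-nodes
  have step : ∀ k, ∃ t t', ϖ (π (i₀ + 2 * k)) = some t ∧ ϖ (π (i₀ + 2 * k + 2)) = some t' ∧
      lexGE (n + 1 - G.prio (π (i₀ + 2 * k + 1))) t t' ∧
      (Odd (G.prio (π (i₀ + 2 * k + 1))) → lexGT (n + 1 - G.prio (π (i₀ + 2 * k + 1))) t t') := by
    intro k
    have h1 : ¬ G.isP (π (i₀ + 2 * k)) := by rw [hO]; simp [Nat.not_odd_iff_even]
    have h2 : G.isP (π (i₀ + 2 * k + 1)) := by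
      rw [show i₀ + 2 * k + 1 = i₀ + (2 * k + 1) from by ring, hO]
      exact ⟨k, by ring⟩
    have h3 : ¬ G.isP (π (i₀ + 2 * k + 2)) := by
      rw [show i₀ + 2 * k + 2 = i₀ + (2 * k + 2) from by ring, hO]
      simp [Nat.not_odd_iff_even, Nat.even_iff]
    have hpl := hist_play G π hπ (i₀ + 2 * k + 2)
    have hcf := hist_conf G π S hc (i₀ + 2 * k + 2)
    have hst := hist_start G π V₀ h0 (i₀ + 2 * k + 2)
    rw [hist_decomp] at hpl hcf hst
    exact hmeas.2 _ _ _ _ hpl hcf hst h1 h2 h3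
  choose t t' ht ht' hge hgt using step
  have htt : ∀ k, t' k = t (k + 1) := by
    intro k
    have := ht (k + 1)
    rw [show i₀ + 2 * (k + 1) = i₀ + 2 * k + 2 from by ring, ht' k] at this
    exact Option.some.inj this
  -- existence of a maximal infinitely occurring priority
  have hfib : ∃ m₀, {i | G.prio (π i) = m₀}.Infinite := by
    obtain ⟨y, hy⟩ := Finite.exists_infinite_fiber
      (fun i => (⟨G.prio (π i), Nat.lt_succ_of_le (hbound _)⟩ : Fin (n + 1)))
    refine ⟨y.val, ?_⟩
    rw [← Set.infinite_coe_iff]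
    refine Set.infinite_coe_iff.mpr ?_
    have := Set.infinite_coe_iff.mp hy
    refine this.mono ?_
    intro i hi
    simp only [Set.mem_preimage, Set.mem_singleton_iff] at hi
    exact congrArg Fin.val hi
  set P : ℕ → Prop := fun m' => {i | G.prio (π i) = m'}.Infinite with hP
  have hle_n : ∀ m', P m' → m' ≤ n := by
    intro m' hm'
    by_contra hgt'
    have hm'' : {i | G.prio (π i) = m'}.Infinite := hm'
    have hempty : {i | G.prio (π i) = m'} = ∅ := by
      ext i; simp only [Set.mem_setOf_eq, Set.mem_empty_iff_false, iff_false]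
      have := hbound (π i); omega
    rw [hempty] at hm''
    exact hm'' Set.finite_empty
  obtain ⟨m₀, hm₀⟩ := hfib
  set m := Nat.findGreatest P n with hm_def
  have hmax : ∀ m', P m' → m' ≤ m := fun m' hm' => Nat.le_findGreatest (hle_n m' hm') hm'
  have hm : P m := Nat.findGreatest_spec (hle_n m₀ hm₀) hm₀
  refine ⟨m, ?_, hm, hmax⟩
  by_contra heven
  have hodd : Odd m := Nat.not_even_iff_odd.mp heven
  have hmn : m ≤ n := hle_n m hm
  -- eventually all priorities ≤ m
  have hBfin : {i | m < G.prio (π i)}.Finite := by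
    have hsub : {i | m < G.prio (π i)} ⊆ ⋃ m' ∈ Finset.Ioc m n, {i | G.prio (π i) = m'} := by
      intro i hi
      simp only [Set.mem_setOf_eq] at hi
      simp only [Set.mem_iUnion, Finset.mem_Ioc]
      exact ⟨G.prio (π i), ⟨hi, hbound _⟩, rfl⟩
    refine Set.Finite.subset (Set.Finite.biUnion (Finset.Ioc m n).finite_toSet ?_) hsub
    intro m' hm'
    simp only [Finset.coe_Ioc, Set.mem_Ioc] at hm'
    by_contra hinf
    have : m' ≤ m := hmax m' hinf
    omega
  obtain ⟨N, hN⟩ := hBfin.bddAbove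
  have hNle : ∀ i, N + 1 ≤ i → G.prio (π i) ≤ m := by
    intro i hi
    by_contra h'
    have : i ≤ N := hN (by simp only [Set.mem_setOf_eq]; omega)
    omega
  have hm0 : m ≠ 0 := by rcases hodd with ⟨c, hc⟩; omega
  -- strict indices are unbounded
  have hstrict : ∀ b, ∃ k, b ≤ k ∧ G.prio (π (i₀ + 2 * k + 1)) = m := by
    intro b
    obtain ⟨i, hi, hib⟩ := hm.exists_gt (i₀ + 2 * b)
    simp only [Set.mem_setOf_eq] at hi
    have hiP : G.isP (π i) := by
      by_contra h'
      have := hopp _ h'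
      rw [this] at hi
      exact hm0 hi.symm
    have hii : i₀ ≤ i := by omega
    obtain ⟨j, rfl⟩ := Nat.exists_eq_add_of_le hii
    have : Odd j := (hO j).mp hiP
    obtain ⟨k, rfl⟩ := this
    refine ⟨k, by omega, ?_⟩
    rw [show i₀ + 2 * k + 1 = i₀ + (2 * k + 1) from by ring]
    exact hi
  set K := n + 1 - m with hK
  have hKpos : 0 < K := by omega
  -- weak decrease after N
  have hge' : ∀ k, N + 1 ≤ k → lexGE K (t k) (t (k + 1)) := by
    intro k hk
    have hp : G.prio (π (i₀ + 2 * k + 1)) ≤ m := hNle _ (by omega)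
    have := hge k
    rw [htt k] at this
    exact lexGE_mono _ _ (by omega) _ _ this
  have hchain : ∀ a, N + 1 ≤ a → ∀ d, lexGE K (t a) (t (a + d)) := by
    intro a ha d
    induction d with
    | zero => exact lexGE_refl _ _
    | succ d ih => exact lexGE_trans _ _ _ _ ih (hge' (a + d) (by omega))
  -- strict decrease
  have hgt' : ∀ k, G.prio (π (i₀ + 2 * k + 1)) = m → lexGT K (t k) (t (k + 1)) := by
    intro k hk
    have := hgt k (hk ▸ hodd)
    rw [htt k, hk] at this
    exact this
  -- build an infinite strictly decreasing sequence
  choose g hg1 hg2 using hstrict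
  set J : ℕ → ℕ := fun r => Nat.rec (g (N + 1)) (fun _ prev => g (prev + 1)) r with hJ
  have hJ0 : J 0 = g (N + 1) := rfl
  have hJs : ∀ r, J (r + 1) = g (J r + 1) := fun r => rfl
  have hJge : ∀ r, N + 1 ≤ J r := by
    intro r
    induction r with
    | zero => exact le_trans le_rfl (hg1 (N + 1))
    | succ r ih =>
      rw [hJs]
      have := hg1 (J r + 1)
      omega
  have hJmono : ∀ r, J r < J (r + 1) := by
    intro r
    rw [hJs]
    have := hg1 (J r + 1)
    omega
  refine lexGT_wf K (fun r => t (J r)) ?_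
  intro r
  have h1 : lexGT K (t (J r)) (t (J r + 1)) := by
    cases r with
    | zero => exact hgt' _ (hg2 (N + 1))
    | succ r => exact hgt' _ (hg2 (J r + 1))
  have h2 : lexGE K (t (J r + 1)) (t (J (r + 1))) := by
    have hle : J r + 1 ≤ J (r + 1) := hJmono r
    have := hchain (J r + 1) (by have := hJge r; omega) (J (r + 1) - (J r + 1))
    rwa [Nat.add_sub_cancel' hle] at this
  exact lexGT_trans_ge _ _ _ _ h1 h2

theorem stmt12 (G : ParityGame)
    (hbip : ∀ v w, G.E v w → (G.isP v ↔ ¬ G.isP w))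
    (hopp : ∀ v, ¬ G.isP v → G.prio v = 0)
    (n : ℕ) (hbound : ∀ v, G.prio v ≤ n)
    (V₀ : Set G.V) (S : List G.V → Option G.V)
    (hS : G.IsStrategy S V₀)
    (γ : Ordinal) (ϖ : G.V → Option (ℕ → Ordinal))
    (hmeas : G.IsProgressMeasure S V₀ n γ ϖ) :
    G.Winning S V₀ ∧
    (∀ π, G.IsInfPlay π → G.ConformsInf S π → π 0 ∈ V₀ → G.ParityCond π) := by
  have main : ∀ π, G.IsInfPlay π → G.ConformsInf S π → π 0 ∈ V₀ → G.ParityCond π :=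
    fun π hπ hc h0 => main_parity G hbip hopp n hbound V₀ S γ ϖ hmeas π hπ hc h0
  refine ⟨⟨?_, main⟩, main⟩
  intro l v hp hc hs hlast hnoedge hPv
  have hsome := hS.2 l hp hc hs ⟨v, hlast, hPv⟩
  obtain ⟨w, hw⟩ := Option.isSome_iff_exists.mp hsome
  exact hnoedge w (hS.1 l v w hw hlast)
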